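/- Let G be a simple graph and let v be a vertex of G of degree at least 3. If x_0, x_1, x_2 are interior points of three distinct edges of G incident with v, then every arc α in |G| containing {x_0, x_1, x_2} has v as an interior point of α, and at least one endpoint of α lies in [v,x_0] ∪ [v,x_1] ∪ [v,x_2]. -/

import Mathlib

open Topology

noncomputable section

variable {V : Type*}

open Classical in
/-- The Dirac function marking a vertex: the point of `|G|` corresponding to vertex `v`. -/
noncomputable def vertexPoint (v : V) : V → ℝ := fun u => if u = v then 1 else 0

open Classical in
/-- The point of `|G|` lying on the edge `vw` at parameter `t` (measured from `v` towards `w`). -/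
noncomputable def edgePoint (v w : V) (t : ℝ) : V → ℝ :=
  fun u => (if u = v then 1 - t else 0) + (if u = w then t else 0)

/-- The geometric realization `|G|` of a simple graph `G`, realized as the set of
formal convex combinations of adjacent pairs of vertices; each closed edge carries
its usual topology as a copy of `[0,1]`. -/
def GraphRealization (G : SimpleGraph V) : Set (V → ℝ) :=
  {x | (∃ v, x = vertexPoint v) ∨
    ∃ v w t, G.Adj v w ∧ t ∈ Set.Icc (0 : ℝ) 1 ∧ x = edgePoint v w t}

/-- A subset of a topological space is an arc if it is homeomorphic to `[0,1]`. -/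
def IsArc {X : Type*} [TopologicalSpace X] (A : Set X) : Prop :=
  Nonempty (↥A ≃ₜ ↥unitInterval)

/-- A space is `n`-arc connected if any at most `n` points lie on a common arc. -/
def NArcConn (X : Type*) [TopologicalSpace X] (n : ℕ) : Prop :=
  ∀ S : Finset X, S.card ≤ n → ∃ A : Set X, IsArc A ∧ ↑S ⊆ A

/-- The unit circle in the plane. -/
def unitCircleSet : Set (ℝ × ℝ) := {p | p.1 ^ 2 + p.2 ^ 2 = 1}

/-- A subset of a topological space is a simple closed curve if homeomorphic to the circle. -/
def IsSimpleClosedCurve {X : Type*} [TopologicalSpace X] (C : Set X) : Prop :=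
  Nonempty (↥C ≃ₜ ↥unitCircleSet)

/-- A space is `n`-circle connected if any at most `n` points lie on a common
simple closed curve. -/
def NCircleConn (X : Type*) [TopologicalSpace X] (n : ℕ) : Prop :=
  ∀ S : Finset X, S.card ≤ n → ∃ C : Set X, IsSimpleClosedCurve C ∧ ↑S ⊆ C

/-- A space is `n`-strongly arc connected if any list of at most `n` points is contained
in an arc, the points appearing along the arc in the listed order. -/
def NStrongArcConn (X : Type*) [TopologicalSpace X] (n : ℕ) : Prop :=
  ∀ l : List X, l.length ≤ n →
    ∃ f : ↥unitInterval → X, Topology.IsEmbedding f ∧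
      ∃ t : Fin l.length → ↥unitInterval, Monotone t ∧ ∀ i, f (t i) = l.get i

/-- A graph is `k`-connected if removing fewer than `k` vertices leaves it connected. -/
def KConnected (G : SimpleGraph V) (k : ℕ) : Prop :=
  ∀ S : Set V, S.encard < (k : ℕ∞) → (G.induce (Sᶜ : Set V)).Connected

/-- A graph is cyclically connected if any two vertices lie on a common cycle. -/
def CyclicallyConnected (G : SimpleGraph V) : Prop :=
  ∀ v w : V, ∃ (u : V) (c : G.Walk u u), c.IsCycle ∧ v ∈ c.support ∧ w ∈ c.support

/-- The circle of radius `r` centered at `c` in the plane. -/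
def circleAt (c : ℝ × ℝ) (r : ℝ) : Set (ℝ × ℝ) :=
  {p | (p.1 - c.1) ^ 2 + (p.2 - c.2) ^ 2 = r ^ 2}

/-- The horizontal segment at height `y` from abscissa `a` to `b`. -/
def hSeg (y a b : ℝ) : Set (ℝ × ℝ) := {p | p.2 = y ∧ a ≤ p.1 ∧ p.1 ≤ b}

/-- The θ-curve: unit circle together with horizontal diameter. -/
def thetaSet : Set (ℝ × ℝ) := circleAt (0, 0) 1 ∪ hSeg 0 (-1) 1

/-- Figure-eight: two unit circles meeting at the origin. -/
def figureEightSet : Set (ℝ × ℝ) := circleAt (-1, 0) 1 ∪ circleAt (1, 0) 1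

/-- Lollipop: unit circle with the segment from `(1,0)` to `(2,0)` attached. -/
def lollipopSet : Set (ℝ × ℝ) := circleAt (0, 0) 1 ∪ hSeg 0 1 2

/-- Lollipop with its free endpoint removed. -/
def openLollipopSet : Set (ℝ × ℝ) := lollipopSet \ {(2, 0)}

/-- Dumbbell: two disjoint unit circles joined by a segment. -/
def dumbbellSet : Set (ℝ × ℝ) := circleAt (-2, 0) 1 ∪ circleAt (2, 0) 1 ∪ hSeg 0 (-1) 1

/-- Happy-face curve: two circles meeting at a point, joined by a further arc. -/
def happyFaceSet : Set (ℝ × ℝ) :=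
  circleAt (-1, 0) 1 ∪ circleAt (1, 0) 1 ∪ {p | p.1 ^ 2 + p.2 ^ 2 = 4 ∧ p.2 ≤ 0}

/-- Baguette curve: two disjoint circles joined by two disjoint arcs. -/
def baguetteSet : Set (ℝ × ℝ) :=
  circleAt (-3, 0) 1 ∪ circleAt (3, 0) 1 ∪ hSeg 0 (-2) 2 ∪ hSeg 1 (-3) 3

/-- A graph is a basic 4-ac graph iff its realization is homeomorphic to a circle,
a θ-curve, a happy-face curve or a baguette curve (this captures precisely the
subdivisions of those four graphs). -/
def IsBasicFourAC {W : Type*} (H : SimpleGraph W) : Prop :=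
  Nonempty (↥(GraphRealization H) ≃ₜ ↥unitCircleSet) ∨
  Nonempty (↥(GraphRealization H) ≃ₜ ↥thetaSet) ∨
  Nonempty (↥(GraphRealization H) ≃ₜ ↥happyFaceSet) ∨
  Nonempty (↥(GraphRealization H) ≃ₜ ↥baguetteSet)

/-- A chain-graph decomposition of the connected graph `G`: links indexed by an
interval `J` of `ℤ`, non-consecutive links are disjoint, consecutive links share
exactly one vertex. -/
structure IsChainGraph (G : SimpleGraph V) (J : Set ℤ) (L : ℤ → G.Subgraph) : Prop where
  connected : G.Connected
  ordConnected : J.OrdConnected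
  nonempty : J.Nonempty
  cover : (⨆ i ∈ J, L i) = (⊤ : G.Subgraph)
  sep : ∀ i ∈ J, ∀ j ∈ J, i + 1 < j → (L i).verts ∩ (L j).verts = ∅
  link : ∀ i ∈ J, i + 1 ∈ J → ∃ v, (L i).verts ∩ (L (i + 1)).verts = {v}

/-- A cut-vertex: a vertex whose removal disconnects the graph. -/
def IsCutVertex (G : SimpleGraph V) (v : V) : Prop :=
  ¬ (G.induce ({v}ᶜ : Set V)).Connected

/-- A block: a maximal 2-connected subgraph. -/
def IsBlock (G : SimpleGraph V) (H : G.Subgraph) : Prop :=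
  KConnected H.coe 2 ∧ ∀ H' : G.Subgraph, H ≤ H' → KConnected H'.coe 2 → H' = H

/-- The block graph of `G`: the bipartite graph on cut-vertices and blocks, a cut-vertex
being adjacent to the blocks containing it. -/
def BlockGraph (G : SimpleGraph V) :
    SimpleGraph ({v : V // IsCutVertex G v} ⊕ {H : G.Subgraph // IsBlock G H}) :=
  SimpleGraph.fromRel fun a b =>
    ∃ (c : {v : V // IsCutVertex G v}) (B : {H : G.Subgraph // IsBlock G H}),
      a = Sum.inl c ∧ b = Sum.inr B ∧ (c : V) ∈ (B : G.Subgraph).verts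

/-- An `A`–`B` path: a path starting in `A`, ending in `B` and meeting `A ∪ B` only
in these two endvertices. -/
structure ABPath (G : SimpleGraph V) (A B : Set V) where
  first : V
  last : V
  walk : G.Walk first last
  isPath : walk.IsPath
  firstA : first ∈ A
  lastB : last ∈ B
  meetA : ∀ v ∈ walk.support, v ∈ A → v = first
  meetB : ∀ v ∈ walk.support, v ∈ B → v = last

/-- A family of pairwise vertex-disjoint paths. -/
def PathFamilyDisjoint {G : SimpleGraph V} {A B : Set V} {k : ℕ}
    (P : Fin k → ABPath G A B) : Prop :=
  ∀ i j, i ≠ j → ∀ v, v ∈ (P i).walk.support → v ∉ (P j).walk.support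

/-- The set of vertices used by a family of paths. -/
def familySupport {G : SimpleGraph V} {A B : Set V} {k : ℕ}
    (P : Fin k → ABPath G A B) : Set V :=
  {v | ∃ i, v ∈ (P i).walk.support}

/-- The set of edges used by a family of paths. -/
def familyEdges {G : SimpleGraph V} {A B : Set V} {k : ℕ}
    (P : Fin k → ABPath G A B) : Set (Sym2 V) :=
  {e | ∃ i, e ∈ (P i).walk.edges}

/-- A walk `W` (with no repeated edges) is alternating with respect to the disjoint
path family `P`: it starts in `A` off the paths; repeated vertices lie on paths of the
family; upon hitting a path by a new edge it follows that path backwards for at least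
one edge; and it traverses edges of paths of the family only backwards. -/
structure IsAlternatingWalk {G : SimpleGraph V} {A B : Set V} {k : ℕ}
    (P : Fin k → ABPath G A B) {x y : V} (W : G.Walk x y) : Prop where
  trail : W.IsTrail
  startA : x ∈ A
  startOff : x ∉ familySupport P
  repeats : ∀ v, List.Duplicate v W.support → v ∈ familySupport P
  follows : ∀ (i : ℕ) (hi : i < W.darts.length) (j : Fin k),
      (W.darts.get ⟨i, hi⟩).snd ∈ (P j).walk.support →
      (W.darts.get ⟨i, hi⟩).edge ∉ (P j).walk.edges →
      ∃ h : i + 1 < W.darts.length, (W.darts.get ⟨i + 1, h⟩).symm ∈ (P j).walk.darts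
  backward : ∀ d ∈ W.darts, ∀ j : Fin k,
      d.edge ∈ (P j).walk.edges → d.symm ∈ (P j).walk.darts

end

section AuxStatement19

variable {V : Type*}

lemma edgePoint_self {v w : V} (h : v ≠ w) (t : ℝ) : edgePoint v w t v = 1 - t := by
  simp [edgePoint, h]

lemma edgePoint_right {v w : V} (h : v ≠ w) (t : ℝ) : edgePoint v w t w = t := by
  simp [edgePoint, h, Ne.symm h]

lemma edgePoint_other {v w u : V} (h1 : u ≠ v) (h2 : u ≠ w) (t : ℝ) :
    edgePoint v w t u = 0 := by simp [edgePoint, h1, h2]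

lemma vertexPoint_eq_edgePoint_zero (v w : V) : vertexPoint v = edgePoint v w 0 := by
  funext u; by_cases h1 : u = v <;> by_cases h2 : u = w <;> simp [vertexPoint, edgePoint, h1, h2]

lemma edgePoint_comm {v w : V} (h : v ≠ w) (t : ℝ) :
    edgePoint v w t = edgePoint w v (1 - t) := by
  funext u
  by_cases h1 : u = v <;> by_cases h2 : u = w <;> simp_all [edgePoint]

lemma continuous_ite_aux (c : Prop) [Decidable c] (g : ℝ → ℝ) (hg : Continuous g) :
    Continuous (fun t => if c then g t else 0) := by
  split_ifs with h
  · exact hg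
  · exact continuous_const

lemma continuous_edgePoint (v w : V) : Continuous (fun t : ℝ => edgePoint v w t) := by
  classical
  refine continuous_pi fun u => ?_
  exact (continuous_ite_aux _ _ (by fun_prop)).add (continuous_ite_aux _ _ continuous_id)

lemma repr_lemma {G : SimpleGraph V} {x : V → ℝ} (hx : x ∈ GraphRealization G)
    {a b : V} (hab : a ≠ b) (ha : x a ∈ Set.Ioo (0:ℝ) 1) (hb : x b ∈ Set.Ioo (0:ℝ) 1) :
    x = edgePoint a b (x b) := by
  rcases hx with ⟨u, rfl⟩ | ⟨c, d, s, hcd, hs, rfl⟩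
  · exfalso
    by_cases h : a = u <;> simp [vertexPoint, h] at ha <;>
      first
      | exact absurd ha.2 (by norm_num)
      | exact absurd ha.1 (by norm_num)
      | exact absurd ha (by norm_num)
  · have hcd' : c ≠ d := hcd.ne
    have hac : a = c ∨ a = d := by
      by_contra h
      push_neg at h
      rw [edgePoint_other h.1 h.2] at ha
      exact absurd ha.1 (by norm_num)
    have hbc : b = c ∨ b = d := by
      by_contra h
      push_neg at h
      rw [edgePoint_other h.1 h.2] at hb
      exact absurd hb.1 (by norm_num)
    rcases hac with rfl | rfl <;> rcases hbc with rfl | rfl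
    · exact absurd rfl hab
    · rw [edgePoint_right hcd']
    · rw [edgePoint_self hcd', edgePoint_comm hcd']
    · exact absurd rfl hab

lemma exists_component_interval {A : Set ℝ} (hA : IsClosed A) (hA01 : A ⊆ Set.Icc 0 1)
    {P : ℝ} (hP : P ∈ A) :
    ∃ a b : ℝ, a ≤ P ∧ P ≤ b ∧ Set.Icc a b ⊆ A ∧
      (∀ s', s' < a → Set.Icc s' P ⊆ A → False) ∧
      (∀ s', b < s' → Set.Icc P s' ⊆ A → False) := by
  set Ta : Set ℝ := {s | s ≤ P ∧ Set.Icc s P ⊆ A} with hTa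
  set Tb : Set ℝ := {s | P ≤ s ∧ Set.Icc P s ⊆ A} with hTb
  have hPa : P ∈ Ta := ⟨le_refl P, by rw [Set.Icc_self]; exact Set.singleton_subset_iff.2 hP⟩
  have hPb : P ∈ Tb := ⟨le_refl P, by rw [Set.Icc_self]; exact Set.singleton_subset_iff.2 hP⟩
  have hTaA : Ta ⊆ A := fun s hs => hs.2 ⟨le_refl s, hs.1⟩
  have hTbA : Tb ⊆ A := fun s hs => hs.2 ⟨hs.1, le_refl s⟩
  have hTane : Ta.Nonempty := ⟨P, hPa⟩
  have hTbne : Tb.Nonempty := ⟨P, hPb⟩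
  have hTabd : BddBelow Ta := ⟨0, fun s hs => (hA01 (hTaA hs)).1⟩
  have hTbbd : BddAbove Tb := ⟨1, fun s hs => (hA01 (hTbA hs)).2⟩
  refine ⟨sInf Ta, sSup Tb, csInf_le hTabd hPa, le_csSup hTbbd hPb, ?_, ?_, ?_⟩
  · intro x hx
    rcases le_total x P with hxP | hPx
    · rcases eq_or_lt_of_le hx.1 with heq | hlt
      · have : sInf Ta ∈ closure Ta := csInf_mem_closure hTane hTabd
        have : sInf Ta ∈ A := hA.closure_subset (closure_mono hTaA this)
        rwa [← heq]
      · obtain ⟨s, hs, hsx⟩ := exists_lt_of_csInf_lt hTane hlt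
        exact hs.2 ⟨le_of_lt hsx, hxP⟩
    · rcases eq_or_lt_of_le hx.2 with heq | hlt
      · have : sSup Tb ∈ closure Tb := csSup_mem_closure hTbne hTbbd
        have : sSup Tb ∈ A := hA.closure_subset (closure_mono hTbA this)
        rwa [heq]
      · obtain ⟨s, hs, hsx⟩ := exists_lt_of_lt_csSup hTbne hlt
        exact hs.2 ⟨hPx, le_of_lt hsx⟩
  · intro s' hs' hsub
    exact absurd (csInf_le hTabd ⟨le_trans hs'.le (csInf_le hTabd hPa), hsub⟩) (not_le.2 hs')
  · intro s' hs' hsub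
    exact absurd (le_csSup hTbbd ⟨le_trans (le_csSup hTbbd hPb) hs'.le, hsub⟩) (not_le.2 hs')


end AuxStatement19

/-- If `v` is a vertex of `G` of degree at least 3 and `x₀, x₁, x₂` are
interior points of three distinct edges of `G` incident with `v` (the point `xᵢ` lying
on the edge from `v` to `w i` at parameter `t i`), then every arc `f` in `|G|`
containing the three points has `v` in its interior, and one of its endpoints lies in
`[v,x₀] ∪ [v,x₁] ∪ [v,x₂]`. -/
theorem statement19 {V : Type*} (G : SimpleGraph V) (v : V)
    (w : Fin 3 → V) (hw : Function.Injective w) (hadj : ∀ i, G.Adj v (w i))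
    (t : Fin 3 → ℝ) (ht : ∀ i, t i ∈ Set.Ioo (0 : ℝ) 1)
    (f : ↥unitInterval → ↥(GraphRealization G)) (hf : Topology.IsEmbedding f)
    (hx : ∀ i : Fin 3, ∃ s, (f s : V → ℝ) = edgePoint v (w i) (t i)) :
    (∃ s : ↥unitInterval, s ≠ 0 ∧ s ≠ 1 ∧ (f s : V → ℝ) = vertexPoint v) ∧
    ∃ ε : ↥unitInterval, (ε = 0 ∨ ε = 1) ∧
      ∃ (i : Fin 3) (r : ℝ), r ∈ Set.Icc (0 : ℝ) (t i) ∧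
        (f ε : V → ℝ) = edgePoint v (w i) r := by
  classical
  have hne : ∀ i, v ≠ w i := fun i => (hadj i).ne
  set f' : ℝ → V → ℝ := fun s => (f (Set.projIcc 0 1 zero_le_one s) : V → ℝ) with hf'def
  have hf'cont : Continuous f' :=
    continuous_subtype_val.comp (hf.continuous.comp continuous_projIcc)
  have hf'mem : ∀ s, f' s ∈ GraphRealization G :=
    fun s => (f (Set.projIcc 0 1 zero_le_one s)).2
  have hf'eq : ∀ s : ↥unitInterval, f' (s : ℝ) = (f s : V → ℝ) := by
    intro s
    have h1 : Set.projIcc (0:ℝ) 1 zero_le_one (s : ℝ) = s := Set.projIcc_of_mem zero_le_one s.2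
    rw [hf'def]
    simp only [h1]
  have hf'inj : Set.InjOn f' (Set.Icc 0 1) := by
    intro s hs s' hs' h
    have h2 : f (Set.projIcc 0 1 zero_le_one s) = f (Set.projIcc 0 1 zero_le_one s') :=
      Subtype.ext h
    have h3 := hf.injective h2
    rw [Set.projIcc_of_mem zero_le_one hs, Set.projIcc_of_mem zero_le_one hs'] at h3
    exact congrArg Subtype.val h3
  set g : Fin 3 → ℝ → ℝ := fun i s => f' s (w i) with hgdef
  have hgcont : ∀ i, Continuous (g i) := fun i => (continuous_apply (w i)).comp hf'cont
  set Seg : Fin 3 → Set (V → ℝ) := fun i => edgePoint v (w i) '' Set.Icc 0 (t i) with hSegdef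
  have hSegclosed : ∀ i, IsClosed (Seg i) :=
    fun i => (isCompact_Icc.image (continuous_edgePoint v (w i))).isClosed
  set A : Fin 3 → Set ℝ := fun i => Set.Icc 0 1 ∩ f' ⁻¹' (Seg i) with hAdef
  have hAclosed : ∀ i, IsClosed (A i) :=
    fun i => isClosed_Icc.inter ((hSegclosed i).preimage hf'cont)
  have hAsub : ∀ i, A i ⊆ Set.Icc 0 1 := fun i => Set.inter_subset_left
  have hArepr : ∀ i s, s ∈ A i →
      g i s ∈ Set.Icc 0 (t i) ∧ f' s = edgePoint v (w i) (g i s) := by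
    intro i s hs
    obtain ⟨r, hr, hfr⟩ := hs.2
    have hgr : g i s = r := by
      show f' s (w i) = r
      rw [← hfr, edgePoint_right (hne i)]
    rw [hgr]
    exact ⟨hr, hfr.symm⟩
  have hAmem : ∀ i s, s ∈ Set.Icc (0:ℝ) 1 → g i s ∈ Set.Icc 0 (t i) →
      f' s = edgePoint v (w i) (g i s) → s ∈ A i :=
    fun i s h1 h2 h3 => ⟨h1, ⟨g i s, h2, h3.symm⟩⟩
  have hxP : ∀ i, ∃ P : ℝ, P ∈ Set.Icc (0:ℝ) 1 ∧ f' P = edgePoint v (w i) (t i) := by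
    intro i
    obtain ⟨s, hs⟩ := hx i
    exact ⟨(s : ℝ), s.2, by rw [hf'eq s, hs]⟩
  choose P hPmem hPval using hxP
  have hPA : ∀ i, P i ∈ A i :=
    fun i => ⟨hPmem i, ⟨t i, ⟨(ht i).1.le, le_refl _⟩, (hPval i).symm⟩⟩
  have hcomp : ∀ i, ∃ a b : ℝ, a ≤ P i ∧ P i ≤ b ∧ Set.Icc a b ⊆ A i ∧
      (∀ s', s' < a → Set.Icc s' (P i) ⊆ A i → False) ∧
      (∀ s', b < s' → Set.Icc (P i) s' ⊆ A i → False) :=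
    fun i => exists_component_interval (hAclosed i) (hAsub i) (hPA i)
  choose a b haP hPb hCsub hexta hextb using hcomp
  have hqex : ∀ i, ∃ q ∈ Set.Icc (a i) (b i),
      ∀ s ∈ Set.Icc (a i) (b i), g i q ≤ g i s := by
    intro i
    obtain ⟨q, hq, hmin⟩ := isCompact_Icc.exists_isMinOn ⟨P i, haP i, hPb i⟩
      ((hgcont i).continuousOn)
    exact ⟨q, hq, fun s hs => hmin hs⟩
  choose q hqC hqmin using hqex
  have hqA : ∀ i, q i ∈ A i := fun i => hCsub i (hqC i)
  have huIcc : ∀ i, g i (q i) ∈ Set.Icc 0 (t i) := fun i => (hArepr i (q i) (hqA i)).1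
  have hqval : ∀ i, f' (q i) = edgePoint v (w i) (g i (q i)) := fun i => (hArepr i (q i) (hqA i)).2
  have hq0 : ∀ i, g i (q i) = 0 → f' (q i) = vertexPoint v := by
    intro i h
    rw [hqval i, h, ← vertexPoint_eq_edgePoint_zero]
  -- point distinction lemmas
  have hvne : ∀ (j : Fin 3) (r : ℝ), 0 < r → vertexPoint v ≠ edgePoint v (w j) r := by
    intro j r hr heq
    have h1 := congrFun heq (w j)
    rw [edgePoint_right (hne j)] at h1
    have h0 : vertexPoint v (w j) = 0 := by simp [vertexPoint, Ne.symm (hne j)]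
    rw [h0] at h1
    linarith
  have hene : ∀ (i j : Fin 3), i ≠ j → ∀ r r' : ℝ, 0 < r →
      edgePoint v (w i) r ≠ edgePoint v (w j) r' := by
    intro i j hij r r' hr heq
    have h1 := congrFun heq (w i)
    rw [edgePoint_right (hne i),
      edgePoint_other (Ne.symm (hne i)) (fun h => hij (hw h))] at h1
    linarith
  have hqdiff : ∀ i j, i ≠ j → 0 < g i (q i) → 0 < g j (q j) → q i ≠ q j := by
    intro i j hij hi hj heq
    exact hene i j hij _ _ hi (by rw [← hqval i, heq, hqval j])
  have hAiAj : ∀ i j, i ≠ j → ∀ x, x ∈ A i → x ∈ A j → f' x = vertexPoint v := by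
    intro i j hij x hxi hxj
    obtain ⟨h1, e1⟩ := hArepr i x hxi
    obtain ⟨h2, e2⟩ := hArepr j x hxj
    have h3 : g i x = 0 := by
      have h4 := congrFun (e1.symm.trans e2) (w i)
      rwa [edgePoint_right (hne i),
        edgePoint_other (Ne.symm (hne i)) (fun h => hij (hw h))] at h4
    rw [e1, h3, ← vertexPoint_eq_edgePoint_zero]
  -- KEY STEP
  have hkey : ∀ i, 0 < g i (q i) → q i = 0 ∨ q i = 1 := by
    intro i hupos
    by_contra hcon
    push_neg at hcon
    have hq01 : q i ∈ Set.Icc (0:ℝ) 1 := hAsub i (hqA i)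
    have hqo : q i ∈ Set.Ioo (0:ℝ) 1 :=
      ⟨lt_of_le_of_ne hq01.1 (Ne.symm hcon.1), lt_of_le_of_ne hq01.2 hcon.2⟩
    have hu1 : g i (q i) < 1 := lt_of_le_of_lt (huIcc i).2 (ht i).2
    set O : Set ℝ := (fun s => f' s v) ⁻¹' Set.Ioo 0 1 ∩
      (fun s => f' s (w i)) ⁻¹' Set.Ioo 0 1 ∩ Set.Ioo 0 1 with hOdef
    have hOopen : IsOpen O :=
      (((isOpen_Ioo.preimage ((continuous_apply v).comp hf'cont)).inter
        (isOpen_Ioo.preimage ((continuous_apply (w i)).comp hf'cont))).inter isOpen_Ioo)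
    have hqmemO : q i ∈ O := by
      refine ⟨⟨?_, ?_⟩, hqo⟩
      · show f' (q i) v ∈ Set.Ioo (0:ℝ) 1
        rw [hqval i, edgePoint_self (hne i)]
        constructor <;> linarith
      · show f' (q i) (w i) ∈ Set.Ioo (0:ℝ) 1
        rw [hqval i, edgePoint_right (hne i)]
        exact ⟨hupos, hu1⟩
    obtain ⟨δ, hδ, hball⟩ := Metric.isOpen_iff.1 hOopen _ hqmemO
    set ε := δ / 2 with hεdef
    have hεpos : 0 < ε := by positivity
    set J := Set.Icc (q i - ε) (q i + ε) with hJdef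
    have hJO : J ⊆ O := by
      intro x hx
      apply hball
      rw [Metric.mem_ball, Real.dist_eq, abs_sub_lt_iff]
      have h1 := hx.1
      have h2 := hx.2
      constructor <;> linarith
    have hJfacts : ∀ x ∈ J, x ∈ Set.Ioo (0:ℝ) 1 ∧ g i x ∈ Set.Ioo (0:ℝ) 1 ∧
        f' x = edgePoint v (w i) (g i x) := by
      intro x hxJ
      obtain ⟨⟨h1, h2⟩, h3⟩ := hJO hxJ
      exact ⟨h3, h2, repr_lemma (hf'mem x) (hne i) h1 h2⟩
    have hJinj : Set.InjOn (g i) J := by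
      intro x hxJ y hyJ hxy
      apply hf'inj (Set.Ioo_subset_Icc_self (hJfacts x hxJ).1)
        (Set.Ioo_subset_Icc_self (hJfacts y hyJ).1)
      rw [(hJfacts x hxJ).2.2, (hJfacts y hyJ).2.2, hxy]
    have hle : q i - ε ≤ q i + ε := by linarith
    have hmem1 : q i - ε ∈ J := ⟨le_refl _, by linarith⟩
    have hmem2 : q i + ε ∈ J := ⟨by linarith, le_refl _⟩
    have hmemq : q i ∈ J := ⟨by linarith, by linarith⟩
    have hstep : ∃ s', g i s' < g i (q i) ∧
        (∀ x, s' ≤ x → x ≤ q i → x ∈ A i) ∧ (∀ x, q i ≤ x → x ≤ s' → x ∈ A i) := by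
      rcases ContinuousOn.strictMonoOn_of_injOn_Icc' hle ((hgcont i).continuousOn) hJinj
        with hm | hm
      · refine ⟨q i - ε, hm hmem1 hmemq (by linarith), ?_, ?_⟩
        · intro x hx1 hx2
          have hxJ : x ∈ J := ⟨hx1, by linarith⟩
          obtain ⟨hxIoo, hgIoo, hrep⟩ := hJfacts x hxJ
          refine hAmem i x (Set.Ioo_subset_Icc_self hxIoo) ⟨hgIoo.1.le, ?_⟩ hrep
          exact le_trans (hm.monotoneOn hxJ hmemq hx2) (huIcc i).2
        · intro x hx1 hx2
          exact absurd (le_trans hx1 hx2) (by simp only [not_le]; linarith)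
      · refine ⟨q i + ε, hm hmemq hmem2 (by linarith), ?_, ?_⟩
        · intro x hx1 hx2
          exact absurd (le_trans hx1 hx2) (by simp only [not_le]; linarith)
        · intro x hx1 hx2
          have hxJ : x ∈ J := ⟨by linarith, hx2⟩
          obtain ⟨hxIoo, hgIoo, hrep⟩ := hJfacts x hxJ
          refine hAmem i x (Set.Ioo_subset_Icc_self hxIoo) ⟨hgIoo.1.le, ?_⟩ hrep
          exact le_trans (hm.antitoneOn hmemq hxJ hx1) (huIcc i).2
    obtain ⟨s', hs'lt, hIa, hIb⟩ := hstep
    have hs'notC : s' ∉ Set.Icc (a i) (b i) :=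
      fun hmem => absurd (hqmin i s' hmem) (not_le.2 hs'lt)
    rw [Set.mem_Icc, not_and_or, not_le, not_le] at hs'notC
    rcases hs'notC with hlt | hlt
    · refine hexta i s' hlt ?_
      intro x hxm
      rcases le_total x (q i) with h | h
      · exact hIa x hxm.1 h
      · exact hCsub i ⟨le_trans (hqC i).1 h, le_trans hxm.2 (hPb i)⟩
    · refine hextb i s' hlt ?_
      intro x hxm
      rcases le_total x (q i) with h | h
      · exact hCsub i ⟨le_trans (haP i) hxm.1, le_trans h (hqC i).2⟩
      · exact hIb x h hxm.2
  -- sides lemmas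
  have hside : ∀ i j, i ≠ j → g i (q i) = 0 → g j (q j) = 0 →
      P i < q i → P j < q i → False := by
    intro i j hij hzi hzj h1 h2
    have hqq : q j = q i :=
      hf'inj (hAsub j (hqA j)) (hAsub i (hqA i)) (by rw [hq0 j hzj, hq0 i hzi])
    set x := max (P i) (P j) with hxdef
    have hxCi : x ∈ Set.Icc (a i) (b i) :=
      ⟨le_trans (haP i) (le_max_left _ _), le_trans (max_le h1.le h2.le) (hqC i).2⟩
    have hxCj : x ∈ Set.Icc (a j) (b j) :=
      ⟨le_trans (haP j) (le_max_right _ _), le_trans (max_le h1.le h2.le) (hqq ▸ (hqC j).2)⟩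
    have hfx : f' x = vertexPoint v := hAiAj i j hij x (hCsub i hxCi) (hCsub j hxCj)
    have hxq : x = q i := hf'inj (hAsub i (hCsub i hxCi)) (hAsub i (hqA i))
      (by rw [hfx, hq0 i hzi])
    have hxlt : x < q i := max_lt h1 h2
    rw [hxq] at hxlt
    exact lt_irrefl _ hxlt
  have hside' : ∀ i j, i ≠ j → g i (q i) = 0 → g j (q j) = 0 →
      q i < P i → q i < P j → False := by
    intro i j hij hzi hzj h1 h2
    have hqq : q j = q i :=
      hf'inj (hAsub j (hqA j)) (hAsub i (hqA i)) (by rw [hq0 j hzj, hq0 i hzi])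
    set x := min (P i) (P j) with hxdef
    have hxCi : x ∈ Set.Icc (a i) (b i) :=
      ⟨le_trans (hqC i).1 (le_min h1.le h2.le), le_trans (min_le_left _ _) (hPb i)⟩
    have hxCj : x ∈ Set.Icc (a j) (b j) :=
      ⟨le_trans (hqq ▸ (hqC j).1) (le_min h1.le h2.le), le_trans (min_le_right _ _) (hPb j)⟩
    have hfx : f' x = vertexPoint v := hAiAj i j hij x (hCsub i hxCi) (hCsub j hxCj)
    have hxq : x = q i := hf'inj (hAsub i (hCsub i hxCi)) (hAsub i (hqA i))
      (by rw [hfx, hq0 i hzi])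
    have hxlt : q i < x := lt_min h1 h2
    rw [hxq] at hxlt
    exact lt_irrefl _ hxlt
  have hPneq : ∀ i, g i (q i) = 0 → P i ≠ q i := by
    intro i hzi h
    exact hvne i (t i) (ht i).1 (by rw [← hq0 i hzi, ← hPval i, h])
  have hzero_Ioo : ∀ i j, i ≠ j → g i (q i) = 0 → g j (q j) = 0 →
      q i ∈ Set.Ioo (0:ℝ) 1 := by
    intro i j hij hzi hzj
    have hqq : q j = q i :=
      hf'inj (hAsub j (hqA j)) (hAsub i (hqA i)) (by rw [hq0 j hzj, hq0 i hzi])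
    have hPi : P i ≠ q i := hPneq i hzi
    have hPj : P j ≠ q i := by rw [← hqq]; exact hPneq j hzj
    rcases lt_or_gt_of_ne hPi with h1 | h1 <;> rcases lt_or_gt_of_ne hPj with h2 | h2
    · exact (hside i j hij hzi hzj h1 h2).elim
    · exact ⟨lt_of_le_of_lt (hPmem i).1 h1, lt_of_lt_of_le h2 (hPmem j).2⟩
    · exact ⟨lt_of_le_of_lt (hPmem j).1 h2, lt_of_lt_of_le h1 (hPmem i).2⟩
    · exact (hside' i j hij hzi hzj h1 h2).elim
  -- existence of a zero index
  have hex0 : ∃ i, g i (q i) = 0 := by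
    by_contra hcon
    push_neg at hcon
    have hupos : ∀ i, 0 < g i (q i) :=
      fun i => lt_of_le_of_ne (huIcc i).1 (Ne.symm (hcon i))
    have hd : ∀ i j, i ≠ j → q i ≠ q j := fun i j hij => hqdiff i j hij (hupos i) (hupos j)
    rcases hkey 0 (hupos 0) with h0 | h0 <;> rcases hkey 1 (hupos 1) with h1 | h1 <;>
      rcases hkey 2 (hupos 2) with h2 | h2 <;>
      first
        | exact hd 0 1 (by decide) (h0.trans h1.symm)
        | exact hd 0 2 (by decide) (h0.trans h2.symm)
        | exact hd 1 2 (by decide) (h1.trans h2.symm)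
  -- existence of a positive index
  have hex_pos : ∃ k, 0 < g k (q k) := by
    by_contra hcon
    push_neg at hcon
    have hz : ∀ i, g i (q i) = 0 := fun i => le_antisymm (hcon i) (huIcc i).1
    have hqq : ∀ i : Fin 3, q i = q 0 := fun i =>
      hf'inj (hAsub i (hqA i)) (hAsub 0 (hqA 0)) (by rw [hq0 i (hz i), hq0 0 (hz 0)])
    have hP0 : ∀ i : Fin 3, P i ≠ q 0 := fun i => by rw [← hqq i]; exact hPneq i (hz i)
    have hside0 : ∀ i j : Fin 3, i ≠ j → P i < q 0 → P j < q 0 → False := by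
      intro i j hij hi hj
      exact hside i j hij (hz i) (hz j) (by rw [hqq i]; exact hi) (by rw [hqq i]; exact hj)
    have hside0' : ∀ i j : Fin 3, i ≠ j → q 0 < P i → q 0 < P j → False := by
      intro i j hij hi hj
      exact hside' i j hij (hz i) (hz j) (by rw [hqq i]; exact hi) (by rw [hqq i]; exact hj)
    rcases lt_or_gt_of_ne (hP0 0) with h0 | h0 <;> rcases lt_or_gt_of_ne (hP0 1) with h1 | h1 <;>
      rcases lt_or_gt_of_ne (hP0 2) with h2 | h2 <;>
      first
        | exact hside0 0 1 (by decide) h0 h1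
        | exact hside0 0 2 (by decide) h0 h2
        | exact hside0 1 2 (by decide) h1 h2
        | exact hside0' 0 1 (by decide) h0 h1
        | exact hside0' 0 2 (by decide) h0 h2
        | exact hside0' 1 2 (by decide) h1 h2
  obtain ⟨i0, hi0z⟩ := hex0
  obtain ⟨k, hkpos⟩ := hex_pos
  -- q i0 is interior
  have hpIoo : q i0 ∈ Set.Ioo (0:ℝ) 1 := by
    by_cases hcase : ∃ j, j ≠ i0 ∧ g j (q j) = 0
    · obtain ⟨j, hji, hjz⟩ := hcase
      exact hzero_Ioo i0 j (fun h => hji h.symm) hi0z hjz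
    · push_neg at hcase
      have hothers : ∀ m : Fin 3, ∃ j k' : Fin 3, j ≠ m ∧ k' ≠ m ∧ j ≠ k' := by decide
      obtain ⟨j, k', hji, hki, hjk⟩ := hothers i0
      have hjpos : 0 < g j (q j) := lt_of_le_of_ne (huIcc j).1 (Ne.symm (hcase j hji))
      have hkpos' : 0 < g k' (q k') := lt_of_le_of_ne (huIcc k').1 (Ne.symm (hcase k' hki))
      have hIcc := hAsub i0 (hqA i0)
      have hpj : q i0 ≠ q j := fun h =>
        hvne j _ hjpos (by rw [← hq0 i0 hi0z, h, hqval j])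
      have hpk : q i0 ≠ q k' := fun h =>
        hvne k' _ hkpos' (by rw [← hq0 i0 hi0z, h, hqval k'])
      rcases hkey j hjpos with hj' | hj' <;> rcases hkey k' hkpos' with hk' | hk'
      · exact absurd (hj'.trans hk'.symm) (hqdiff j k' hjk hjpos hkpos')
      · exact ⟨lt_of_le_of_ne hIcc.1 (fun h => hpj (h.symm.trans hj'.symm)),
          lt_of_le_of_ne hIcc.2 (fun h => hpk (h.trans hk'.symm))⟩
      · exact ⟨lt_of_le_of_ne hIcc.1 (fun h => hpk (h.symm.trans hk'.symm)),
          lt_of_le_of_ne hIcc.2 (fun h => hpj (h.trans hj'.symm))⟩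
      · exact absurd (hj'.trans hk'.symm) (hqdiff j k' hjk hjpos hkpos')
  constructor
  · refine ⟨⟨q i0, hpIoo.1.le, hpIoo.2.le⟩, ?_, ?_, ?_⟩
    · intro h
      have h2 : q i0 = 0 := congrArg Subtype.val h
      exact absurd h2 (ne_of_gt hpIoo.1)
    · intro h
      have h2 : q i0 = 1 := congrArg Subtype.val h
      exact absurd h2 (ne_of_lt hpIoo.2)
    · have h3 := hf'eq ⟨q i0, hpIoo.1.le, hpIoo.2.le⟩
      rw [← h3]
      exact hq0 i0 hi0z
  · rcases hkey k hkpos with hk0 | hk0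
    · refine ⟨0, Or.inl rfl, k, g k (q k), huIcc k, ?_⟩
      have h3 := hf'eq 0
      rw [← h3, Set.Icc.coe_zero, ← hk0]
      exact hqval k
    · refine ⟨1, Or.inr rfl, k, g k (q k), huIcc k, ?_⟩
      have h3 := hf'eq 1
      rw [← h3, Set.Icc.coe_one, ← hk0]
      exact hqval k
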